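/- Let G be a finite simple graph with vertex set S and edge set E. For F ⊆ E, let o(F) denote the number of vertices of S having odd degree in the graph (S, F), and define the cost of F as |F| + (|S| − o(F)). Then the minimum of the cost over all subsets F ⊆ E equals |S| − ν(G), where ν(G) is the matching number of G. -/

import Mathlib

/-- `M` is a matching of the simple graph `G`: a finite set of edges of `G`,
no two of which share a vertex. -/
def IsMatchingIn {V : Type*} (G : SimpleGraph V) (M : Finset (Sym2 V)) : Prop :=
  ↑M ⊆ G.edgeSet ∧ ∀ e ∈ M, ∀ f ∈ M, e ≠ f → ∀ v : V, ¬(v ∈ e ∧ v ∈ f)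

/-- The matching number `ν(G)`: the maximum size of a matching of `G`. -/
noncomputable def matchingNumber {V : Type*} (G : SimpleGraph V) : ℕ :=
  sSup {n : ℕ | ∃ M : Finset (Sym2 V), IsMatchingIn G M ∧ M.card = n}

/-- `oddCount F` is the number of vertices having odd degree in the graph with edge set `F`,
where the degree of `v` is the number of edges of `F` incident to `v`. -/
def oddCount {V : Type*} [Fintype V] [DecidableEq V] (F : Finset (Sym2 V)) : ℕ :=
  (Finset.univ.filter fun v : V => (F.filter fun e => v ∈ e).card % 2 = 1).card

set_option linter.unusedSectionVars false

section auxlemmas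
variable {V : Type*} [Fintype V] [DecidableEq V]
variable {V : Type*} [Fintype V] [DecidableEq V]

lemma sym2_three {f : Sym2 V} {x y z : V} (hx : x ∈ f) (hy : y ∈ f) (hz : z ∈ f)
    (hxy : x ≠ y) (hxz : x ≠ z) (hyz : y ≠ z) : False := by
  induction f using Sym2.ind with
  | _ a b =>
    simp only [Sym2.mem_iff] at hx hy hz
    rcases hx with rfl|rfl <;> rcases hy with rfl|rfl <;> rcases hz with rfl|rfl <;> simp_all

lemma key : ∀ n (F : Finset (Sym2 V)), F.card ≤ n →
    ∃ M, M ⊆ F ∧ (∀ e ∈ M, ∀ f ∈ M, e ≠ f → ∀ v : V, ¬(v ∈ e ∧ v ∈ f)) ∧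
      oddCount F ≤ F.card + M.card := by
  intro n
  induction n with
  | zero =>
    intro F hF
    have : F = ∅ := Finset.card_eq_zero.mp (Nat.le_zero.mp hF)
    subst this
    exact ⟨∅, by simp, by simp, by simp [oddCount]⟩
  | succ n ih =>
    intro F hF
    by_cases h : oddCount F ≤ F.card
    · exact ⟨∅, by simp, by simp, by simpa using h⟩
    push_neg at h
    set O := Finset.univ.filter fun v : V => (F.filter fun e => v ∈ e).card % 2 = 1 with hO
    have hOcard : oddCount F = O.card := rfl
    -- double counting to find an edge with two odd endpoints
    have hsum : O.card ≤ ∑ e ∈ F, (O.filter fun v => v ∈ e).card := by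
      have h1 : ∀ v ∈ O, 1 ≤ (F.filter fun e => v ∈ e).card := by
        intro v hv
        have := (Finset.mem_filter.mp hv).2
        omega
      calc O.card = ∑ v ∈ O, 1 := by simp
        _ ≤ ∑ v ∈ O, (F.filter fun e => v ∈ e).card := Finset.sum_le_sum h1
        _ = ∑ v ∈ O, ∑ e ∈ F, if v ∈ e then 1 else 0 := by
            simp only [Finset.card_filter]
        _ = ∑ e ∈ F, ∑ v ∈ O, if v ∈ e then 1 else 0 := Finset.sum_comm
        _ = ∑ e ∈ F, (O.filter fun v => v ∈ e).card := by
            simp only [Finset.card_filter]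
    have hex : ∃ e ∈ F, 2 ≤ (O.filter fun v => v ∈ e).card := by
      by_contra hc
      push_neg at hc
      have : ∑ e ∈ F, (O.filter fun v => v ∈ e).card ≤ ∑ e ∈ F, 1 :=
        Finset.sum_le_sum fun e he => by have := hc e he; omega
      simp only [Finset.sum_const, smul_eq_mul, mul_one] at this
      omega
    obtain ⟨e, heF, he2⟩ := hex
    obtain ⟨u, hu, v, hv, huv⟩ := Finset.one_lt_card.mp (by omega : 1 < (O.filter fun v => v ∈ e).card)
    have huO : u ∈ O := (Finset.mem_filter.mp hu).1
    have hue : u ∈ e := (Finset.mem_filter.mp hu).2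
    have hvO : v ∈ O := (Finset.mem_filter.mp hv).1
    have hve : v ∈ e := (Finset.mem_filter.mp hv).2
    have hmem_e : ∀ w ∈ e, w = u ∨ w = v := by
      intro w hw
      by_contra hcon
      push_neg at hcon
      exact sym2_three hw hue hve hcon.1 hcon.2 huv
    set F' := F.filter (fun f => ¬(u ∈ f ∨ v ∈ f)) with hF'
    set R := F.filter (fun f => u ∈ f ∨ v ∈ f) with hR
    have hsplit : R.card + F'.card = F.card :=
      Finset.card_filter_add_card_filter_not _
    have heR : e ∈ R := Finset.mem_filter.mpr ⟨heF, Or.inl hue⟩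
    have hR1 : 1 ≤ R.card := Finset.card_pos.mpr ⟨e, heR⟩
    have hF'n : F'.card ≤ n := by omega
    obtain ⟨M', hM'F', hM'match, hM'count⟩ := ih F' hF'n
    set O' := Finset.univ.filter fun v : V => (F'.filter fun e => v ∈ e).card % 2 = 1 with hO'
    have hO'card : oddCount F' = O'.card := rfl
    -- bound on change of odd count
    have hBex : ∀ w ∈ ((O \ O').erase u).erase v, ∃ f, f ∈ R.erase e ∧ w ∈ f := by
      intro w hw
      have hwv : w ≠ v := (Finset.mem_erase.mp hw).1
      have hwu : w ≠ u := (Finset.mem_erase.mp (Finset.mem_erase.mp hw).2).1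
      have hwD : w ∈ O \ O' := (Finset.mem_erase.mp (Finset.mem_erase.mp hw).2).2
      have hwO : w ∈ O := (Finset.mem_sdiff.mp hwD).1
      have hwO' : w ∉ O' := (Finset.mem_sdiff.mp hwD).2
      have hp1 : (F.filter fun e => w ∈ e).card % 2 = 1 := (Finset.mem_filter.mp hwO).2
      have hp2 : ¬((F'.filter fun e => w ∈ e).card % 2 = 1) := by
        intro hc
        exact hwO' (Finset.mem_filter.mpr ⟨Finset.mem_univ w, hc⟩)
      have hsub : (F'.filter fun e => w ∈ e) ⊆ (F.filter fun e => w ∈ e) :=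
        Finset.filter_subset_filter _ (Finset.filter_subset _ _)
      have hne : (F'.filter fun e => w ∈ e) ≠ (F.filter fun e => w ∈ e) := by
        intro hc; rw [hc] at hp2; exact hp2 hp1
      obtain ⟨f, hf1, hf2⟩ := Finset.exists_of_ssubset (lt_of_le_of_ne hsub hne)
      have hfF : f ∈ F := (Finset.mem_filter.mp hf1).1
      have hwf : w ∈ f := (Finset.mem_filter.mp hf1).2
      have hfF' : f ∉ F' := fun hc => hf2 (Finset.mem_filter.mpr ⟨hc, hwf⟩)
      have hfR : f ∈ R := by
        rw [hR, Finset.mem_filter]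
        refine ⟨hfF, ?_⟩
        by_contra hc
        exact hfF' (Finset.mem_filter.mpr ⟨hfF, hc⟩)
      have hfe : f ≠ e := by
        intro hc; subst hc
        rcases hmem_e w hwf with rfl | rfl
        · exact hwu rfl
        · exact hwv rfl
      exact ⟨f, Finset.mem_erase.mpr ⟨hfe, hfR⟩, hwf⟩
    have hBcard : (((O \ O').erase u).erase v).card ≤ (R.erase e).card := by
      apply Finset.card_le_card_of_injOn
        (fun w => if h : ∃ f, f ∈ R.erase e ∧ w ∈ f then h.choose else e)
      · intro w hw
        dsimp only
        rw [dif_pos (hBex w hw)]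
        exact (hBex w hw).choose_spec.1
      · intro w1 hw1 w2 hw2 heq
        simp only at heq
        rw [dif_pos (hBex w1 hw1), dif_pos (hBex w2 hw2)] at heq
        set f := (hBex w1 hw1).choose with hfdef
        have hf1 : f ∈ R.erase e ∧ w1 ∈ f := (hBex w1 hw1).choose_spec
        have hf2 : w2 ∈ f := heq ▸ (hBex w2 hw2).choose_spec.2
        by_contra hne
        have hfR : f ∈ R := Finset.mem_of_mem_erase hf1.1
        have huvf : u ∈ f ∨ v ∈ f := (Finset.mem_filter.mp hfR).2
        have h1v : w1 ≠ v := (Finset.mem_erase.mp hw1).1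
        have h1u : w1 ≠ u := (Finset.mem_erase.mp (Finset.mem_erase.mp hw1).2).1
        have h2v : w2 ≠ v := (Finset.mem_erase.mp hw2).1
        have h2u : w2 ≠ u := (Finset.mem_erase.mp (Finset.mem_erase.mp hw2).2).1
        rcases huvf with hl | hl
        · exact sym2_three hl hf1.2 hf2 (Ne.symm h1u) (Ne.symm h2u) hne
        · exact sym2_three hl hf1.2 hf2 (Ne.symm h1v) (Ne.symm h2v) hne
    have hDcard : (O \ O').card ≤ 2 + (((O \ O').erase u).erase v).card := by
      have := Finset.pred_card_le_card_erase (a := u) (s := O \ O')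
      have := Finset.pred_card_le_card_erase (a := v) (s := (O \ O').erase u)
      omega
    have hOO' : O.card ≤ O'.card + (R.card + 1) := by
      have hs : O ⊆ O' ∪ (O \ O') := by
        intro w hw
        by_cases hw' : w ∈ O'
        · exact Finset.mem_union_left _ hw'
        · exact Finset.mem_union_right _ (Finset.mem_sdiff.mpr ⟨hw, hw'⟩)
      have h1 : O.card ≤ O'.card + (O \ O').card :=
        le_trans (Finset.card_le_card hs) (Finset.card_union_le _ _)
      have h2 : (R.erase e).card = R.card - 1 := Finset.card_erase_of_mem heR
      omega
    -- build the matching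
    have heF' : e ∉ F' := by
      intro hc
      exact (Finset.mem_filter.mp hc).2 (Or.inl hue)
    have heM' : e ∉ M' := fun hc => heF' (hM'F' hc)
    refine ⟨insert e M', ?_, ?_, ?_⟩
    · intro f hf
      rcases Finset.mem_insert.mp hf with rfl | hf
      · exact heF
      · exact Finset.filter_subset _ _ (hM'F' hf)
    · intro a ha b hb hab w hw
      obtain ⟨hwa, hwb⟩ := hw
      rcases Finset.mem_insert.mp ha with ha' | ha'
      · rcases Finset.mem_insert.mp hb with hb' | hb'
        · exact hab (ha'.trans hb'.symm)
        · have hnb : ¬(u ∈ b ∨ v ∈ b) := (Finset.mem_filter.mp (hM'F' hb')).2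
          rcases hmem_e w (ha' ▸ hwa) with rfl | rfl
          · exact hnb (Or.inl hwb)
          · exact hnb (Or.inr hwb)
      · rcases Finset.mem_insert.mp hb with hb' | hb'
        · have hna : ¬(u ∈ a ∨ v ∈ a) := (Finset.mem_filter.mp (hM'F' ha')).2
          rcases hmem_e w (hb' ▸ hwb) with rfl | rfl
          · exact hna (Or.inl hwa)
          · exact hna (Or.inr hwa)
        · exact hM'match a ha' b hb' hab w ⟨hwa, hwb⟩
    · have hcard : (insert e M').card = M'.card + 1 := Finset.card_insert_of_notMem heM'
      rw [hOcard] at *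
      omega
variable {V : Type*} [Fintype V] [DecidableEq V]

lemma oddCount_matching (G : SimpleGraph V) (M : Finset (Sym2 V)) (hM : IsMatchingIn G M) :
    oddCount M = 2 * M.card := by
  have hdeg : ∀ v : V, (M.filter fun e => v ∈ e).card ≤ 1 := by
    intro v
    apply Finset.card_le_one.mpr
    intro e he f hf
    by_contra hne
    exact hM.2 e (Finset.mem_filter.mp he).1 f (Finset.mem_filter.mp hf).1 hne v
      ⟨(Finset.mem_filter.mp he).2, (Finset.mem_filter.mp hf).2⟩
  have hset : (Finset.univ.filter fun v : V => (M.filter fun e => v ∈ e).card % 2 = 1)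
      = M.biUnion (fun e => Finset.univ.filter (· ∈ e)) := by
    ext v
    simp only [Finset.mem_filter, Finset.mem_biUnion, Finset.mem_univ, true_and]
    constructor
    · intro h
      have hc := hdeg v
      have : 0 < (M.filter fun e => v ∈ e).card := by omega
      obtain ⟨e, he⟩ := Finset.card_pos.mp this
      exact ⟨e, (Finset.mem_filter.mp he).1, (Finset.mem_filter.mp he).2⟩
    · rintro ⟨e, heM, hve⟩
      have : 0 < (M.filter fun e => v ∈ e).card :=
        Finset.card_pos.mpr ⟨e, Finset.mem_filter.mpr ⟨heM, hve⟩⟩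
      have hc := hdeg v
      omega
  have hdisj : ∀ e ∈ M, ∀ f ∈ M, e ≠ f →
      Disjoint (Finset.univ.filter (· ∈ e)) (Finset.univ.filter (· ∈ f)) := by
    intro e he f hf hef
    rw [Finset.disjoint_left]
    intro v hv1 hv2
    exact hM.2 e he f hf hef v
      ⟨(Finset.mem_filter.mp hv1).2, (Finset.mem_filter.mp hv2).2⟩
  have hterm : ∀ e ∈ M, (Finset.univ.filter (· ∈ e)).card = 2 := by
    intro e he
    have hd : ¬ e.IsDiag := G.not_isDiag_of_mem_edgeSet (hM.1 he)
    induction e using Sym2.ind with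
    | _ a b =>
      have hab : a ≠ b := by
        intro hc; exact hd (by simp [hc])
      have : (Finset.univ.filter (· ∈ s(a, b))) = {a, b} := by
        ext w; simp [Sym2.mem_iff]
      rw [this, Finset.card_insert_of_notMem (by simp [hab]), Finset.card_singleton]
  rw [oddCount, hset, Finset.card_biUnion hdisj, Finset.sum_congr rfl hterm]
  simp [mul_comm]
end auxlemmas

/-- For a finite simple graph `G` with vertex set `V` and edge set `E`,
the minimum over all `F ⊆ E` of the cost `|F| + (|V| − o(F))`, where `o(F)` is the number
of odd-degree vertices of `(V, F)`, equals `|V| − ν(G)`. -/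
theorem stmt6 {V : Type*} [Fintype V] [DecidableEq V] (G : SimpleGraph V) :
    sInf {c : ℕ | ∃ F : Finset (Sym2 V), ↑F ⊆ G.edgeSet ∧
        c = F.card + (Fintype.card V - oddCount F)} =
      Fintype.card V - matchingNumber G := by
  have hbdd : BddAbove {n : ℕ | ∃ M : Finset (Sym2 V), IsMatchingIn G M ∧ M.card = n} := by
    refine ⟨Fintype.card (Sym2 V), ?_⟩
    rintro n ⟨M, _, rfl⟩
    exact Finset.card_le_univ M
  have hN0 : 0 ∈ {n : ℕ | ∃ M : Finset (Sym2 V), IsMatchingIn G M ∧ M.card = n} :=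
    ⟨∅, ⟨by simp, by simp⟩, rfl⟩
  have hmem : matchingNumber G ∈
      {n : ℕ | ∃ M : Finset (Sym2 V), IsMatchingIn G M ∧ M.card = n} :=
    Nat.sSup_mem ⟨0, hN0⟩ hbdd
  obtain ⟨Mmax, hMmax, hMcard⟩ := hmem
  have hle : ∀ M : Finset (Sym2 V), IsMatchingIn G M → M.card ≤ matchingNumber G :=
    fun M h => le_csSup hbdd ⟨M, h, rfl⟩
  have hodd := oddCount_matching G Mmax hMmax
  have h2nu : 2 * Mmax.card ≤ Fintype.card V := by
    rw [← hodd, oddCount]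
    exact (Finset.card_filter_le _ _).trans_eq Finset.card_univ
  have hmemS : Fintype.card V - matchingNumber G ∈ {c : ℕ | ∃ F : Finset (Sym2 V),
      ↑F ⊆ G.edgeSet ∧ c = F.card + (Fintype.card V - oddCount F)} := by
    refine ⟨Mmax, hMmax.1, ?_⟩
    rw [hodd, ← hMcard]
    omega
  apply le_antisymm
  · exact Nat.sInf_le hmemS
  · have hc := Nat.sInf_mem ⟨_, hmemS⟩
    obtain ⟨F, hFE, hFc⟩ := hc
    obtain ⟨M, hMF, hMm, hcount⟩ := key F.card F le_rfl
    have hMG : IsMatchingIn G M :=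
      ⟨Set.Subset.trans (Finset.coe_subset.mpr hMF) hFE, hMm⟩
    have h1 := hle M hMG
    have h2 : oddCount F ≤ Fintype.card V := by
      rw [oddCount]
      exact (Finset.card_filter_le _ _).trans_eq Finset.card_univ
    rw [hFc]
    omega
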